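/- Consider the layer map Y(u) = σ(∑_{k=1}^K a_k ⟨B_k(·,u), X(·)⟩_{N_u^{(k)}} + bias), where σ: ℝ → ℝ is 1-Lipschitz (non-expansive), the neighborhoods satisfy the symmetry v ∈ N_u^{(k)} ⟺ u ∈ N_v^{(k)} and ∑_{k=1}^K |N_u^{(k)}| ≤ Kp for all u, and β := sup_{k,u} ‖B_k(·,u)‖_{2,N_u^{(k)}}. Then for any two inputs X, X̃ with Δ X = X̃ - X, the outputs satisfy ‖ΔY‖₂ ≤ β ‖a‖₂ √(Kp) ‖ΔX‖₂. -/
import Mathlib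


/-- Representation stability of the low-rank local filter layer (Theorem 1):
with 1-Lipschitz `σ`, symmetric neighborhoods, `∑_k |N_u^{(k)}| ≤ K p`, and
local filter norms bounded by `β`, we get `‖ΔY‖₂ ≤ β ‖a‖₂ √(Kp) ‖ΔX‖₂`. -/
theorem layer_stability {V : Type*} [Fintype V] [DecidableEq V]
    (K p : ℕ) (a : Fin K → ℝ) (N : Fin K → V → Finset V)
    (B : Fin K → V → V → ℝ) (bias : ℝ) (σ : ℝ → ℝ)
    (hσ : ∀ s t : ℝ, |σ s - σ t| ≤ |s - t|)
    (hsym : ∀ (k : Fin K) (u v : V), v ∈ N k u ↔ u ∈ N k v)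
    (hcount : ∀ u : V, ∑ k : Fin K, (N k u).card ≤ K * p)
    (β : ℝ)
    (hβ : ∀ (k : Fin K) (u : V), Real.sqrt (∑ v ∈ N k u, (B k v u) ^ 2) ≤ β)
    (X Xt : V → ℝ)
    (Y : (V → ℝ) → V → ℝ)
    (hY : ∀ (Z : V → ℝ) (u : V),
      Y Z u = σ (∑ k : Fin K, a k * ∑ v ∈ N k u, B k v u * Z v + bias)) :
    Real.sqrt (∑ u : V, (Y Xt u - Y X u) ^ 2) ≤
      β * Real.sqrt (∑ k : Fin K, a k ^ 2) * Real.sqrt ((K : ℝ) * p) *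
        Real.sqrt (∑ u : V, (Xt u - X u) ^ 2) := by
  set D : V → ℝ := fun v => (Xt v - X v) ^ 2 with hD
  -- degenerate cases
  rcases isEmpty_or_nonempty V with hV | hV
  · simp [Finset.univ_eq_empty]
  rcases Nat.eq_zero_or_pos K with hK | hK
  · subst hK
    have h0 : ∀ u : V, Y Xt u - Y X u = 0 := by
      intro u; rw [hY, hY]; simp
    simp [h0]
  have hβ0 : 0 ≤ β := le_trans (Real.sqrt_nonneg _) (hβ ⟨0, hK⟩ (Classical.arbitrary V))
  have hDnn : ∀ v, 0 ≤ D v := fun v => sq_nonneg _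
  -- pointwise bound
  have hpt : ∀ u : V, (Y Xt u - Y X u) ^ 2 ≤
      (∑ k : Fin K, a k ^ 2) *
        ∑ k : Fin K, (∑ v ∈ N k u, B k v u * (Xt v - X v)) ^ 2 := by
    intro u
    have h1 : |Y Xt u - Y X u| ≤
        |∑ k : Fin K, a k * ∑ v ∈ N k u, B k v u * (Xt v - X v)| := by
      rw [hY, hY]
      refine le_trans (hσ _ _) (le_of_eq ?_)
      congr 1
      rw [add_sub_add_right_eq_sub, ← Finset.sum_sub_distrib]
      refine Finset.sum_congr rfl fun k _ => ?_
      rw [← mul_sub, ← Finset.sum_sub_distrib]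
      congr 1
      exact Finset.sum_congr rfl fun v _ => by ring
    calc (Y Xt u - Y X u) ^ 2 = |Y Xt u - Y X u| ^ 2 := (sq_abs _).symm
      _ ≤ |∑ k : Fin K, a k * ∑ v ∈ N k u, B k v u * (Xt v - X v)| ^ 2 := by
          exact pow_le_pow_left₀ (abs_nonneg _) h1 2
      _ = (∑ k : Fin K, a k * ∑ v ∈ N k u, B k v u * (Xt v - X v)) ^ 2 := sq_abs _
      _ ≤ _ := Finset.sum_mul_sq_le_sq_mul_sq _ _ _
  -- local Cauchy-Schwarz
  have hT : ∀ (k : Fin K) (u : V),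
      (∑ v ∈ N k u, B k v u * (Xt v - X v)) ^ 2 ≤ β ^ 2 * ∑ v ∈ N k u, D v := by
    intro k u
    have h1 := Finset.sum_mul_sq_le_sq_mul_sq (N k u) (fun v => B k v u)
      (fun v => Xt v - X v)
    refine h1.trans (mul_le_mul_of_nonneg_right ?_ (Finset.sum_nonneg fun v _ => hDnn v))
    have h2 : ∑ v ∈ N k u, (B k v u) ^ 2 =
        Real.sqrt (∑ v ∈ N k u, (B k v u) ^ 2) ^ 2 :=
      (Real.sq_sqrt (Finset.sum_nonneg fun v _ => sq_nonneg _)).symm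
    rw [h2]
    exact pow_le_pow_left₀ (Real.sqrt_nonneg _) (hβ k u) 2
  -- swap sums using symmetry
  have hswap : ∀ k : Fin K,
      ∑ u : V, ∑ v ∈ N k u, D v = ∑ v : V, ((N k v).card : ℝ) * D v := by
    intro k
    have h1 : ∀ u : V, ∑ v ∈ N k u, D v =
        ∑ v : V, if v ∈ N k u then D v else 0 := by
      intro u
      rw [Finset.sum_ite_mem, Finset.univ_inter]
    simp_rw [h1]
    rw [Finset.sum_comm]
    refine Finset.sum_congr rfl fun v _ => ?_
    have h2 : ∀ u : V, (if v ∈ N k u then D v else 0) =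
        (if u ∈ N k v then D v else 0) := by
      intro u; simp [hsym k u v]
    simp_rw [h2, Finset.sum_ite_mem, Finset.univ_inter, Finset.sum_const,
      nsmul_eq_mul]
  -- main sum bound
  have hmain : ∑ u : V, (Y Xt u - Y X u) ^ 2 ≤
      β ^ 2 * (∑ k : Fin K, a k ^ 2) * (((K : ℝ) * p) * ∑ v : V, D v) := by
    calc ∑ u : V, (Y Xt u - Y X u) ^ 2
        ≤ ∑ u : V, (∑ k : Fin K, a k ^ 2) *
            ∑ k : Fin K, (∑ v ∈ N k u, B k v u * (Xt v - X v)) ^ 2 :=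
          Finset.sum_le_sum fun u _ => hpt u
      _ ≤ ∑ u : V, (∑ k : Fin K, a k ^ 2) *
            ∑ k : Fin K, β ^ 2 * ∑ v ∈ N k u, D v := by
          refine Finset.sum_le_sum fun u _ => ?_
          exact mul_le_mul_of_nonneg_left
            (Finset.sum_le_sum fun k _ => hT k u)
            (Finset.sum_nonneg fun k _ => sq_nonneg _)
      _ = β ^ 2 * (∑ k : Fin K, a k ^ 2) *
            ∑ k : Fin K, ∑ u : V, ∑ v ∈ N k u, D v := by
          rw [← Finset.mul_sum, Finset.sum_comm]
          simp_rw [← Finset.mul_sum]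
          ring
      _ = β ^ 2 * (∑ k : Fin K, a k ^ 2) *
            ∑ v : V, (∑ k : Fin K, ((N k v).card : ℝ)) * D v := by
          simp_rw [hswap, Finset.sum_comm (γ := Fin K), Finset.sum_mul]
      _ ≤ β ^ 2 * (∑ k : Fin K, a k ^ 2) * (((K : ℝ) * p) * ∑ v : V, D v) := by
          refine mul_le_mul_of_nonneg_left ?_
            (mul_nonneg (sq_nonneg _) (Finset.sum_nonneg fun k _ => sq_nonneg _))
          rw [Finset.mul_sum]
          refine Finset.sum_le_sum fun v _ => ?_
          refine mul_le_mul_of_nonneg_right ?_ (hDnn v)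
          have := hcount v
          calc ∑ k : Fin K, ((N k v).card : ℝ)
              = ((∑ k : Fin K, (N k v).card : ℕ) : ℝ) := by push_cast; ring
            _ ≤ ((K * p : ℕ) : ℝ) := by exact_mod_cast this
            _ = (K : ℝ) * p := by push_cast; ring
  -- conclude via sqrt
  have h := Real.sqrt_le_sqrt hmain
  refine h.trans (le_of_eq ?_)
  rw [Real.sqrt_mul (by positivity), Real.sqrt_mul (by positivity),
    Real.sqrt_mul (by positivity), Real.sqrt_sq hβ0]
  ring
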